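/- For all states ρ, σ on a tensor product H₁ ⊗ H₂ of finite-dimensional complex Hilbert spaces, if the support (range) of σ is contained in the support of ρ, then E_m(ρ) ≤ E_m(σ). -/

import Mathlib

open Matrix Kronecker BigOperators ComplexOrder

noncomputable section

namespace QAdditivity

/-- von Neumann entropy of a matrix (junk value `0` if not Hermitian):
`S(ρ) = -∑ᵢ λᵢ log λᵢ` over the eigenvalues of `ρ`. -/
def entropy {ι : Type} [Fintype ι] [DecidableEq ι] (ρ : Matrix ι ι ℂ) : ℝ :=
  if h : ρ.IsHermitian then ∑ i, Real.negMulLog (h.eigenvalues i) else 0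

/-- A state: positive semidefinite with trace one. -/
def IsState {ι : Type} [Fintype ι] (ρ : Matrix ι ι ℂ) : Prop :=
  ρ.PosSemidef ∧ ρ.trace = 1

/-- A pure state: rank-one state, i.e. `|φ⟩⟨φ|` for a unit vector `φ`. -/
def IsPureState {ι : Type} [Fintype ι] (ρ : Matrix ι ι ℂ) : Prop :=
  ∃ φ : ι → ℂ, star φ ⬝ᵥ φ = 1 ∧ ρ = vecMulVec φ (star φ)

/-- Partial trace over the second tensor factor. -/
def trRight {ι κ : Type} [Fintype ι] [Fintype κ]
    (ρ : Matrix (ι × κ) (ι × κ) ℂ) : Matrix ι ι ℂ :=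
  Matrix.of fun i j => ∑ k, ρ (i, k) (j, k)

/-- Partial trace over the first tensor factor. -/
def trLeft {ι κ : Type} [Fintype ι] [Fintype κ]
    (ρ : Matrix (ι × κ) (ι × κ) ℂ) : Matrix κ κ ℂ :=
  Matrix.of fun k l => ∑ i, ρ (i, k) (i, l)

/-- Entanglement of a (pure) bipartite state: `E(π) = S(tr_{H₂} π)`. -/
def pureEnt {ι κ : Type} [Fintype ι] [Fintype κ] [DecidableEq ι]
    (π : Matrix (ι × κ) (ι × κ) ℂ) : ℝ :=
  entropy (trRight π)

/-- `E_m(ρ)`: minimum over finite pure-state ensembles for `ρ` of the minimal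
entanglement appearing in the ensemble. -/
def Em {ι κ : Type} [Fintype ι] [Fintype κ] [DecidableEq ι]
    (ρ : Matrix (ι × κ) (ι × κ) ℂ) : ℝ :=
  sInf { e : ℝ | ∃ (n : ℕ) (p : Fin (n + 1) → ℝ)
      (π : Fin (n + 1) → Matrix (ι × κ) (ι × κ) ℂ),
    (∀ i, 0 < p i) ∧ (∀ i, IsPureState (π i)) ∧
    (∑ i, (p i : ℂ) • π i) = ρ ∧
    e = Finset.univ.inf' Finset.univ_nonempty fun i => pureEnt (π i) }

/-- Entanglement of formation `E_f(ρ)`. -/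
def Ef {ι κ : Type} [Fintype ι] [Fintype κ] [DecidableEq ι]
    (ρ : Matrix (ι × κ) (ι × κ) ℂ) : ℝ :=
  sInf { e : ℝ | ∃ (n : ℕ) (p : Fin (n + 1) → ℝ)
      (π : Fin (n + 1) → Matrix (ι × κ) (ι × κ) ℂ),
    (∀ i, 0 < p i) ∧ (∀ i, IsPureState (π i)) ∧
    (∑ i, (p i : ℂ) • π i) = ρ ∧
    e = ∑ i, p i * pureEnt (π i) }

/-- Canonical reordering `(H₁⊗H₂)⊗(H₁'⊗H₂') ≃ (H₁⊗H₁')⊗(H₂⊗H₂')` on matrices. -/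
def reorder {a b a' b' : Type}
    (M : Matrix ((a × b) × (a' × b')) ((a × b) × (a' × b')) ℂ) :
    Matrix ((a × a') × (b × b')) ((a × a') × (b × b')) ℂ :=
  Matrix.reindex (Equiv.prodProdProdComm a b a' b') (Equiv.prodProdProdComm a b a' b') M

/-- Complete positivity of a superoperator. -/
def IsCompletelyPositive {κ η : Type} [Fintype κ] [Fintype η]
    (f : Matrix κ κ ℂ → Matrix η η ℂ) : Prop :=
  ∀ (n : ℕ) (M : Matrix (κ × Fin n) (κ × Fin n) ℂ), M.PosSemidef →
    Matrix.PosSemidef (Matrix.of fun p q : η × Fin n =>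
      f (Matrix.of fun a b => M (a, p.2) (b, q.2)) p.1 q.1)

/-- A quantum channel: a completely positive trace preserving linear map. -/
def IsChannel {κ η : Type} [Fintype κ] [Fintype η]
    (f : Matrix κ κ ℂ → Matrix η η ℂ) : Prop :=
  IsLinearMap ℂ f ∧ IsCompletelyPositive f ∧ ∀ M, (f M).trace = M.trace

/-- Minimum output entropy of a channel. -/
def Smin {κ η : Type} [Fintype κ] [Fintype η] [DecidableEq η]
    (f : Matrix κ κ ℂ → Matrix η η ℂ) : ℝ :=
  sInf { e : ℝ | ∃ ρ : Matrix κ κ ℂ, IsState ρ ∧ e = entropy (f ρ) }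

/-- The tensor product `Λ ⊗ Λ'` of two superoperators (defined on all of
`B(K ⊗ K')` by linearity via matrix units). -/
def tensorChannel {κ η κ' η' : Type} [Fintype κ] [Fintype κ']
    [DecidableEq κ] [DecidableEq κ']
    (f : Matrix κ κ ℂ → Matrix η η ℂ) (g : Matrix κ' κ' ℂ → Matrix η' η' ℂ) :
    Matrix (κ × κ') (κ × κ') ℂ → Matrix (η × η') (η × η') ℂ :=
  fun M => Matrix.of fun p q =>
    ∑ a, ∑ b, ∑ a', ∑ b', M (a, a') (b, b') *
      f (Matrix.single a b 1) p.1 q.1 *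
      g (Matrix.single a' b' 1) p.2 q.2

/-- Support of an operator: its range. -/
def supp {ι : Type} [Fintype ι] (ρ : Matrix ι ι ℂ) : Submodule ℂ (ι → ℂ) :=
  LinearMap.range ρ.mulVecLin

-- Auxiliary lemmas
section Aux
variable {ι : Type} [Fintype ι] [DecidableEq ι]

set_option linter.unusedSectionVars false

omit [DecidableEq ι] in
lemma vecMulVec_mulVec' (v w x : ι → ℂ) : vecMulVec v w *ᵥ x = (w ⬝ᵥ x) • v := by
  ext i
  simp [vecMulVec_apply, mulVec, dotProduct, Finset.mul_sum, mul_comm, mul_left_comm]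

omit [DecidableEq ι] in
lemma star_dotProduct_comm' (φ x : ι → ℂ) :
    star x ⬝ᵥ φ = starRingEnd ℂ (star φ ⬝ᵥ x) := by
  simp [dotProduct, map_sum, mul_comm]

omit [DecidableEq ι] in
lemma dotProduct_pure (φ x : ι → ℂ) :
    star x ⬝ᵥ (vecMulVec φ (star φ)) *ᵥ x
      = (Complex.normSq (star φ ⬝ᵥ x) : ℂ) := by
  rw [vecMulVec_mulVec', dotProduct_smul, smul_eq_mul, mul_comm,
    star_dotProduct_comm' φ x, Complex.conj_mul']
  norm_cast
  rw [Complex.normSq_eq_norm_sq]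

omit [Fintype ι] [DecidableEq ι] in
lemma pure_hermitian (φ : ι → ℂ) : (vecMulVec φ (star φ)).IsHermitian := by
  ext i j
  simp [conjTranspose_apply, vecMulVec_apply, mul_comm]

omit [DecidableEq ι] in
lemma pure_posSemidef (φ : ι → ℂ) : (vecMulVec φ (star φ)).PosSemidef := by
  refine PosSemidef.of_dotProduct_mulVec_nonneg (pure_hermitian φ) fun x => ?_
  rw [dotProduct_pure]
  exact_mod_cast Complex.normSq_nonneg _

omit [DecidableEq ι] in
lemma pure_trace {φ : ι → ℂ} (h : star φ ⬝ᵥ φ = 1) :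
    (vecMulVec φ (star φ)).trace = 1 := by
  rw [← h]
  simp [Matrix.trace, vecMulVec_apply, dotProduct, diag, mul_comm]

omit [DecidableEq ι] in
lemma hermitian_move {A : Matrix ι ι ℂ} (hA : A.IsHermitian) (u w : ι → ℂ) :
    star (A *ᵥ u) ⬝ᵥ w = star u ⬝ᵥ (A *ᵥ w) := by
  rw [star_mulVec, ← dotProduct_mulVec, hA.eq]

omit [DecidableEq ι] in
lemma dp_cs (u w : ι → ℂ) :
    ‖star u ⬝ᵥ w‖ ^ 2 ≤ (star u ⬝ᵥ u).re * (star w ⬝ᵥ w).re := by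
  have h := norm_inner_le_norm (𝕜 := ℂ) ((WithLp.equiv 2 (ι → ℂ)).symm u)
    ((WithLp.equiv 2 (ι → ℂ)).symm w)
  have e : ∀ a b : ι → ℂ, inner ℂ ((WithLp.equiv 2 (ι → ℂ)).symm a)
      ((WithLp.equiv 2 (ι → ℂ)).symm b) = star a ⬝ᵥ b := fun a b => by
    rw [dotProduct_comm]; rfl
  rw [e] at h
  have h2 : ‖star u ⬝ᵥ w‖ ^ 2 ≤
      (‖(WithLp.equiv 2 (ι → ℂ)).symm u‖ * ‖(WithLp.equiv 2 (ι → ℂ)).symm w‖) ^ 2 :=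
    pow_le_pow_left₀ (norm_nonneg _) h 2
  rw [mul_pow] at h2
  refine h2.trans_eq ?_
  rw [← inner_self_eq_norm_sq (𝕜 := ℂ), ← inner_self_eq_norm_sq (𝕜 := ℂ),
    e, e]
  rfl

open scoped MatrixOrder in
lemma cs_psd {ρ : Matrix ι ι ℂ} (hρ : ρ.PosSemidef) (ψ x : ι → ℂ) :
    ‖star (ρ *ᵥ ψ) ⬝ᵥ x‖ ^ 2 ≤ (star ψ ⬝ᵥ ρ *ᵥ ψ).re * (star x ⬝ᵥ ρ *ᵥ x).re := by
  set A := CFC.sqrt ρ with hAdef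
  have hAH : A.IsHermitian := (nonneg_iff_posSemidef.mp (CFC.sqrt_nonneg ρ)).1
  have hAA : A * A = ρ := CFC.sqrt_mul_sqrt_self ρ (nonneg_iff_posSemidef.mpr hρ)
  have h1 : star (ρ *ᵥ ψ) ⬝ᵥ x = star (A *ᵥ ψ) ⬝ᵥ (A *ᵥ x) := by
    rw [← hAA, ← mulVec_mulVec, hermitian_move hAH]
  have h2 : star ψ ⬝ᵥ ρ *ᵥ ψ = star (A *ᵥ ψ) ⬝ᵥ (A *ᵥ ψ) := by
    rw [hermitian_move hAH, mulVec_mulVec, hAA]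
  have h3 : star x ⬝ᵥ ρ *ᵥ x = star (A *ᵥ x) ⬝ᵥ (A *ᵥ x) := by
    rw [hermitian_move hAH, mulVec_mulVec, hAA]
  rw [h1, h2, h3]
  exact dp_cs _ _

lemma solve_range {σ : Matrix ι ι ℂ} (hσ : σ.PosSemidef) (φ : ι → ℂ)
    (hker : ∀ x, σ *ᵥ x = 0 → star φ ⬝ᵥ x = 0) : ∃ ψ, σ *ᵥ ψ = φ := by
  have hH : σ.IsHermitian := hσ.1
  set U : Matrix ι ι ℂ := (hH.eigenvectorUnitary : Matrix ι ι ℂ) with hU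
  have hU1 : star U * U = 1 := mem_unitaryGroup_iff'.mp (hH.eigenvectorUnitary).2
  set lam : ι → ℝ := hH.eigenvalues with hlam
  set D : Matrix ι ι ℂ := diagonal (fun i => (lam i : ℂ)) with hD
  have hspec : σ = U * D * star U := by
    have := hH.spectral_theorem
    rw [Unitary.conjStarAlgAut_apply] at this
    exact this
  set Dinv : Matrix ι ι ℂ := diagonal (fun i => if lam i = 0 then 0 else ((lam i)⁻¹ : ℂ)) with hDinv
  set E : Matrix ι ι ℂ := diagonal (fun i => if lam i = 0 then (0 : ℂ) else 1) with hE
  have hDDinv : D * Dinv = E := by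
    rw [hD, hDinv, hE, diagonal_mul_diagonal, diagonal_eq_diagonal_iff]
    intro i
    by_cases h : lam i = 0
    · simp [h]
    · rw [if_neg h, if_neg h, mul_inv_cancel₀ (by exact_mod_cast h)]
  have hDE : D * E = D := by
    rw [hD, hE, diagonal_mul_diagonal, diagonal_eq_diagonal_iff]
    intro i
    by_cases h : lam i = 0 <;> simp [h]
  have hEE : E * E = E := by
    rw [hE, diagonal_mul_diagonal, diagonal_eq_diagonal_iff]
    intro i
    by_cases h : lam i = 0 <;> simp [h]
  have hEH : E.conjTranspose = E := by
    rw [hE, diagonal_conjTranspose, diagonal_eq_diagonal_iff]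
    intro i
    by_cases h : lam i = 0 <;> simp [h, Pi.star_apply]
  set P : Matrix ι ι ℂ := U * E * star U with hP
  have hPH : P.IsHermitian := by
    rw [Matrix.IsHermitian, hP, conjTranspose_mul, conjTranspose_mul, hEH,
      star_eq_conjTranspose, conjTranspose_conjTranspose, Matrix.mul_assoc]
  have key : ∀ M₁ M₂ : Matrix ι ι ℂ,
      (U * M₁ * star U) * (U * M₂ * star U) = U * (M₁ * M₂) * star U := by
    intro M₁ M₂
    simp only [Matrix.mul_assoc]
    rw [← Matrix.mul_assoc (star U) U (M₂ * star U), hU1, Matrix.one_mul]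
  have hPP : P * P = P := by rw [hP, key, hEE]
  have hσP : σ * P = σ := by rw [hspec, hP, key, hDE]
  set ψ : ι → ℂ := (U * Dinv * star U) *ᵥ φ with hψ
  have hσψ : σ *ᵥ ψ = P *ᵥ φ := by
    rw [hψ, mulVec_mulVec, hspec, key, hDDinv, ← hP]
  refine ⟨ψ, ?_⟩
  rw [hσψ]
  have hQ : σ *ᵥ ((1 - P) *ᵥ φ) = 0 := by
    rw [mulVec_mulVec, Matrix.mul_sub, Matrix.mul_one, hσP, sub_self, zero_mulVec]
  have h0 : star φ ⬝ᵥ ((1 - P) *ᵥ φ) = 0 := hker _ hQ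
  have hQH : (1 - P).IsHermitian := (isHermitian_one).sub hPH
  have hQQ : (1 - P) * (1 - P) = 1 - P := by
    rw [Matrix.mul_sub, Matrix.sub_mul, Matrix.sub_mul, hPP, Matrix.mul_one,
      Matrix.one_mul, Matrix.mul_one]
    abel
  have h1 : star ((1 - P) *ᵥ φ) ⬝ᵥ ((1 - P) *ᵥ φ) = 0 := by
    rw [star_mulVec, ← dotProduct_mulVec, hQH.eq, mulVec_mulVec, hQQ, h0]
  have h2 : (1 - P) *ᵥ φ = 0 := dotProduct_star_self_eq_zero.mp h1
  have h3 : φ - P *ᵥ φ = 0 := by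
    rw [← h2, Matrix.sub_mulVec, Matrix.one_mulVec]
  linear_combination (norm := module) -h3

lemma ensemble_exists (τ : Matrix ι ι ℂ) (hτ : τ.PosSemidef) (htr : τ.trace ≠ 0) :
    ∃ (m : ℕ) (q : Fin (m + 1) → ℝ) (μ : Fin (m + 1) → Matrix ι ι ℂ),
      (∀ i, 0 < q i) ∧ (∀ i, IsPureState (μ i)) ∧ ∑ i, (q i : ℂ) • μ i = τ := by
  have hH : τ.IsHermitian := hτ.1
  set U : Matrix ι ι ℂ := (hH.eigenvectorUnitary : Matrix ι ι ℂ) with hU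
  have hU1 : star U * U = 1 := mem_unitaryGroup_iff'.mp (hH.eigenvectorUnitary).2
  set lam : ι → ℝ := hH.eigenvalues with hlam
  set v : ι → ι → ℂ := fun i a => U a i with hv
  have hunit : ∀ i, star (v i) ⬝ᵥ v i = 1 := by
    intro i
    have : (star U * U) i i = 1 := by rw [hU1, Matrix.one_apply_eq]
    rw [← this, Matrix.mul_apply]
    simp [dotProduct, hv, star_eq_conjTranspose, conjTranspose_apply]
  have hdecomp : τ = ∑ i, (lam i : ℂ) • vecMulVec (v i) (star (v i)) := by
    have hspec := hH.spectral_theorem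
    ext a b
    rw [hspec, Unitary.conjStarAlgAut_apply]
    rw [Matrix.mul_apply]
    simp only [Matrix.sum_apply, Matrix.smul_apply, vecMulVec_apply, Matrix.mul_apply,
      diagonal_apply, Function.comp, smul_eq_mul, mul_ite, mul_zero,
      Finset.sum_ite_eq', Finset.mem_univ, if_true]
    refine Finset.sum_congr rfl fun i _ => ?_
    simp [hv, hU, star_eq_conjTranspose, conjTranspose_apply, Pi.star_apply]
    ring
  classical
  set s : Finset ι := Finset.univ.filter (fun i => 0 < lam i) with hs
  have hdecomp2 : τ = ∑ i ∈ s, (lam i : ℂ) • vecMulVec (v i) (star (v i)) := by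
    rw [hdecomp]
    symm
    apply Finset.sum_subset (Finset.subset_univ s)
    intro i _ hi
    have h0 : lam i = 0 := by
      rcases (hτ.eigenvalues_nonneg i).eq_or_lt with h | h
      · exact h.symm
      · exact absurd (Finset.mem_filter.mpr ⟨Finset.mem_univ i, h⟩) hi
    simp [h0]
  have hsne : s.Nonempty := by
    rcases Finset.eq_empty_or_nonempty s with h | h
    · exfalso
      apply htr
      rw [hdecomp2, h]
      simp
    · exact h
  obtain ⟨m, hm⟩ : ∃ m, s.card = m + 1 :=
    Nat.exists_eq_succ_of_ne_zero (by simpa using hsne.card_pos.ne')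
  set e : Fin (m + 1) ≃ s := (finCongr hm).symm.trans s.equivFin.symm with he
  refine ⟨m, fun j => lam (e j), fun j => vecMulVec (v (e j)) (star (v (e j))), ?_, ?_, ?_⟩
  · intro j
    exact (Finset.mem_filter.mp (e j).2).2
  · intro j
    exact ⟨v (e j), hunit _, rfl⟩
  · rw [hdecomp2, ← Finset.sum_coe_sort s]
    exact Fintype.sum_equiv e _ _ (fun j => rfl)

lemma trace_eq_sum_eigenvalues {ρ : Matrix ι ι ℂ} (hH : ρ.IsHermitian) :
    ρ.trace = ∑ i, (hH.eigenvalues i : ℂ) := by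
  conv_lhs => rw [hH.spectral_theorem, Unitary.conjStarAlgAut_apply]
  rw [Matrix.trace_mul_cycle,
    mem_unitaryGroup_iff'.mp (hH.eigenvectorUnitary).2, Matrix.one_mul, Matrix.trace_diagonal]
  simp

lemma entropy_nonneg_of_state {ρ : Matrix ι ι ℂ} (hpsd : ρ.PosSemidef) (htr : ρ.trace = 1) :
    0 ≤ entropy ρ := by
  rw [entropy, dif_pos hpsd.1]
  have hev : ∀ i, 0 ≤ hpsd.1.eigenvalues i := hpsd.eigenvalues_nonneg
  have hsum : ∑ i, hpsd.1.eigenvalues i = 1 := by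
    have h1 := trace_eq_sum_eigenvalues hpsd.1
    rw [htr] at h1
    have h2 : ((1 : ℝ) : ℂ) = ((∑ i, hpsd.1.eigenvalues i : ℝ) : ℂ) := by
      push_cast
      exact h1
    exact_mod_cast h2.symm
  refine Finset.sum_nonneg fun i _ => Real.negMulLog_nonneg (hev i) ?_
  calc hpsd.1.eigenvalues i ≤ ∑ j, hpsd.1.eigenvalues j :=
        Finset.single_le_sum (fun j _ => hev j) (Finset.mem_univ i)
    _ = 1 := hsum

omit [DecidableEq ι] in
lemma sum_mulVec' {k : ℕ} (A : Fin k → Matrix ι ι ℂ) (x : ι → ℂ) :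
    (∑ i, A i) *ᵥ x = ∑ i, A i *ᵥ x := by
  ext j
  simp only [mulVec, dotProduct, Matrix.sum_apply, Finset.sum_apply, Finset.sum_mul]
  rw [Finset.sum_comm]

omit [DecidableEq ι] in
lemma dotProduct_sum' {k : ℕ} (v : ι → ℂ) (w : Fin k → ι → ℂ) :
    v ⬝ᵥ (∑ i, w i) = ∑ i, v ⬝ᵥ w i := by
  simp only [dotProduct, Finset.sum_apply, Finset.mul_sum]
  rw [Finset.sum_comm]

end Aux

section Aux2
variable {ι κ : Type} [Fintype ι] [Fintype κ] [DecidableEq ι]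

set_option linter.unusedSectionVars false

lemma trRight_posSemidef {ρ : Matrix (ι × κ) (ι × κ) ℂ} (h : ρ.PosSemidef) :
    (trRight ρ).PosSemidef := by
  classical
  refine PosSemidef.of_dotProduct_mulVec_nonneg ?_ ?_
  · ext i j
    simp only [conjTranspose_apply, trRight, Matrix.of_apply, star_sum]
    refine Finset.sum_congr rfl fun k _ => ?_
    have h1 : ρ.conjTranspose (i, k) (j, k) = ρ (i, k) (j, k) :=
      congr_fun (congr_fun h.1 (i, k)) (j, k)
    rw [conjTranspose_apply] at h1
    exact h1
  · intro x
    have hterm : ∀ k : κ, (star (fun p : ι × κ => if p.2 = k then x p.1 else 0) ⬝ᵥ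
        ρ *ᵥ (fun p : ι × κ => if p.2 = k then x p.1 else 0))
        = ∑ i, ∑ j, star (x i) * (ρ (i, k) (j, k) * x j) := by
      intro k
      simp only [dotProduct, mulVec, Fintype.sum_prod_type, Pi.star_apply,
        apply_ite (star : ℂ → ℂ), star_zero, ite_mul, zero_mul, mul_ite, mul_zero,
        Finset.sum_ite_eq', Finset.mem_univ, if_true, Finset.mul_sum, dotProduct]
      rw [Finset.sum_comm]
      refine (Finset.sum_eq_single_of_mem k (Finset.mem_univ k) ?_).trans ?_
      · intro b _ hb
        simp [hb]
      · simp
    have key1 : star x ⬝ᵥ trRight ρ *ᵥ x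
        = ∑ i, ∑ j, ∑ k, star (x i) * (ρ (i, k) (j, k) * x j) := by
      simp only [dotProduct, mulVec, trRight, Matrix.of_apply, Pi.star_apply,
        Finset.sum_mul, Finset.mul_sum]
    have key : star x ⬝ᵥ trRight ρ *ᵥ x
        = ∑ k, ∑ i, ∑ j, star (x i) * (ρ (i, k) (j, k) * x j) :=
      key1.trans ((Finset.sum_congr rfl fun i _ => Finset.sum_comm).trans
        (Finset.sum_comm))
    rw [key, ← Finset.sum_congr rfl fun k _ => hterm k]
    exact Finset.sum_nonneg fun k _ => h.dotProduct_mulVec_nonneg _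

lemma trRight_trace (ρ : Matrix (ι × κ) (ι × κ) ℂ) : (trRight ρ).trace = ρ.trace := by
  simp [trRight, Matrix.trace, Matrix.diag, Fintype.sum_prod_type]

lemma pureEnt_nonneg {π : Matrix (ι × κ) (ι × κ) ℂ} (hπ : IsPureState π) :
    0 ≤ pureEnt π := by
  obtain ⟨φ, hφ1, hφ2⟩ := hπ
  refine entropy_nonneg_of_state (trRight_posSemidef ?_) ?_
  · rw [hφ2]; exact pure_posSemidef φ
  · rw [trRight_trace, hφ2, pure_trace hφ1]

end Aux2

/-- `E_m` is antitone with respect to inclusion of supports. -/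
theorem Em_antitone_support
    {ι κ : Type} [Fintype ι] [Fintype κ] [DecidableEq ι]
    (ρ σ : Matrix (ι × κ) (ι × κ) ℂ) (hρ : IsState ρ) (hσ : IsState σ)
    (h : supp σ ≤ supp ρ) :
    Em ρ ≤ Em σ := by
  classical
  have bdd : BddBelow { e : ℝ | ∃ (n : ℕ) (p : Fin (n + 1) → ℝ)
      (π : Fin (n + 1) → Matrix (ι × κ) (ι × κ) ℂ),
      (∀ i, 0 < p i) ∧ (∀ i, IsPureState (π i)) ∧
      (∑ i, (p i : ℂ) • π i) = ρ ∧
      e = Finset.univ.inf' Finset.univ_nonempty fun i => pureEnt (π i) } := by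
    refine ⟨0, ?_⟩
    rintro e ⟨n, p, π, hp, hpure, hsum, rfl⟩
    exact Finset.le_inf' _ _ fun i _ => pureEnt_nonneg (hpure i)
  obtain ⟨m₀, q₀, μ₀, hq₀, hμ₀, hsum₀⟩ :=
    ensemble_exists σ hσ.1 (by rw [hσ.2]; exact one_ne_zero)
  refine le_csInf ⟨_, m₀, q₀, μ₀, hq₀, hμ₀, hsum₀, rfl⟩ ?_
  rintro e ⟨n, p, π, hp, hpure, hsum, rfl⟩
  obtain ⟨i₀, -, hinf⟩ :=
    Finset.exists_mem_eq_inf' (Finset.univ_nonempty) (fun i => pureEnt (π i))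
  rw [hinf]
  obtain ⟨φ, hφ1, hφ2⟩ := hpure i₀
  -- the vector φ is orthogonal to the kernel of σ
  have hker : ∀ x, σ *ᵥ x = 0 → star φ ⬝ᵥ x = 0 := by
    intro x hx
    have h0 : star x ⬝ᵥ σ *ᵥ x = 0 := by rw [hx, dotProduct_zero]
    have hexp : star x ⬝ᵥ σ *ᵥ x = ∑ i, (p i : ℂ) * (star x ⬝ᵥ (π i) *ᵥ x) := by
      rw [← hsum, sum_mulVec', dotProduct_sum']
      refine Finset.sum_congr rfl fun i _ => ?_
      rw [smul_mulVec, dotProduct_smul, smul_eq_mul]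
    have hnn : ∀ i ∈ Finset.univ, (0 : ℂ) ≤ (p i : ℂ) * (star x ⬝ᵥ (π i) *ᵥ x) := by
      intro i _
      obtain ⟨ψi, h1, h2⟩ := hpure i
      refine mul_nonneg ?_ (by rw [h2]; exact (pure_posSemidef ψi).dotProduct_mulVec_nonneg x)
      exact_mod_cast (hp i).le
    have hz := (Finset.sum_eq_zero_iff_of_nonneg hnn).mp (by rw [← hexp]; exact h0)
    have h4 := hz i₀ (Finset.mem_univ i₀)
    have h5 : star x ⬝ᵥ (π i₀) *ᵥ x = 0 := by
      rcases mul_eq_zero.mp h4 with h | h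
      · exact absurd h (by exact_mod_cast (hp i₀).ne')
      · exact h
    rw [hφ2, dotProduct_pure] at h5
    have h6 : Complex.normSq (star φ ⬝ᵥ x) = 0 := by exact_mod_cast h5
    exact Complex.normSq_eq_zero.mp h6
  obtain ⟨ψ₀, hψ₀⟩ := solve_range hσ.1 φ hker
  have hmem : φ ∈ supp ρ := h ⟨ψ₀, by simpa using hψ₀⟩
  obtain ⟨ψ, hψ⟩ := hmem
  replace hψ : ρ *ᵥ ψ = φ := by simpa using hψ
  set c : ℝ := (star ψ ⬝ᵥ ρ *ᵥ ψ).re with hc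
  have hρψnn : (0 : ℂ) ≤ star ψ ⬝ᵥ ρ *ᵥ ψ := hρ.1.dotProduct_mulVec_nonneg ψ
  have hcim : (star ψ ⬝ᵥ ρ *ᵥ ψ).im = 0 := by
    have := (Complex.le_def.mp hρψnn).2
    simpa using this.symm
  have hcnn : 0 ≤ c := by
    have := (Complex.le_def.mp hρψnn).1
    simpa [hc] using this
  have hc0 : 0 < c := by
    rcases hcnn.eq_or_lt with hce | hcl
    · exfalso
      have hzero : star ψ ⬝ᵥ ρ *ᵥ ψ = 0 := by
        apply Complex.ext
        · simpa [hc] using hce.symm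
        · simpa using hcim
      have hρψ0 : ρ *ᵥ ψ = 0 := (hρ.1.dotProduct_mulVec_zero_iff ψ).mp hzero
      rw [hψ] at hρψ0
      rw [hρψ0] at hφ1
      simp at hφ1
    · exact hcl
  set ε : ℝ := min c⁻¹ 2⁻¹ with hεdef
  have hε0 : 0 < ε := lt_min (inv_pos.mpr hc0) (by norm_num)
  have hε1 : ε ≤ c⁻¹ := min_le_left _ _
  have hεhalf : ε ≤ 2⁻¹ := min_le_right _ _
  set G : Matrix (ι × κ) (ι × κ) ℂ := vecMulVec φ (star φ) with hGdef
  have hGpsd : G.PosSemidef := pure_posSemidef φ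
  set τ : Matrix (ι × κ) (ι × κ) ℂ := ρ - (ε : ℂ) • G with hτdef
  have hτpsd : τ.PosSemidef := by
    refine PosSemidef.of_dotProduct_mulVec_nonneg ?_ ?_
    · have h1 : ((ε : ℂ) • G).IsHermitian := by
        show ((ε : ℂ) • G)ᴴ = (ε : ℂ) • G
        rw [conjTranspose_smul, hGpsd.1.eq]
        congr 1
        exact Complex.conj_ofReal ε
      exact hρ.1.1.sub h1
    · intro x
      have hexp : star x ⬝ᵥ τ *ᵥ x
          = star x ⬝ᵥ ρ *ᵥ x - (ε : ℂ) * (star x ⬝ᵥ G *ᵥ x) := by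
        rw [hτdef, Matrix.sub_mulVec, dotProduct_sub, smul_mulVec,
          dotProduct_smul, smul_eq_mul]
      have hxρ : (0 : ℂ) ≤ star x ⬝ᵥ ρ *ᵥ x := hρ.1.dotProduct_mulVec_nonneg x
      have haim : (star x ⬝ᵥ ρ *ᵥ x).im = 0 := by
        have := (Complex.le_def.mp hxρ).2
        simpa using this.symm
      have hare : 0 ≤ (star x ⬝ᵥ ρ *ᵥ x).re := by
        have := (Complex.le_def.mp hxρ).1
        simpa using this
      have hcs : ‖star φ ⬝ᵥ x‖ ^ 2 ≤ c * (star x ⬝ᵥ ρ *ᵥ x).re := by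
        have h1 := cs_psd hρ.1 ψ x
        nth_rewrite 1 [hψ] at h1
        rw [hc]
        exact h1
      have hns : Complex.normSq (star φ ⬝ᵥ x) = ‖star φ ⬝ᵥ x‖ ^ 2 := by
        rw [Complex.normSq_eq_norm_sq]
      rw [hexp, hGdef, dotProduct_pure]
      rw [Complex.le_def]
      constructor
      · simp only [Complex.zero_re, Complex.sub_re, Complex.mul_re,
          Complex.ofReal_re, Complex.ofReal_im, Complex.zero_im, zero_mul, sub_zero]
        have hb : 0 ≤ ‖star φ ⬝ᵥ x‖ ^ 2 := sq_nonneg _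
        have e1 : ε * ‖star φ ⬝ᵥ x‖ ^ 2 ≤ c⁻¹ * ‖star φ ⬝ᵥ x‖ ^ 2 :=
          mul_le_mul_of_nonneg_right hε1 hb
        have e2 : c⁻¹ * ‖star φ ⬝ᵥ x‖ ^ 2 ≤ c⁻¹ * (c * (star x ⬝ᵥ ρ *ᵥ x).re) :=
          mul_le_mul_of_nonneg_left hcs (inv_nonneg.mpr hcnn)
        have e3 : c⁻¹ * (c * (star x ⬝ᵥ ρ *ᵥ x).re) = (star x ⬝ᵥ ρ *ᵥ x).re := by
          rw [← mul_assoc, inv_mul_cancel₀ hc0.ne', one_mul]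
        rw [hns]
        linarith
      · simp [Complex.sub_im, Complex.mul_im, haim, Complex.ofReal_im]
  have hτtr : τ.trace = ((1 - ε : ℝ) : ℂ) := by
    rw [hτdef, trace_sub, trace_smul, hρ.2, hGdef, pure_trace hφ1]
    push_cast
    simp [smul_eq_mul]
  have hτne : τ.trace ≠ 0 := by
    rw [hτtr]
    have : (1 : ℝ) - ε ≠ 0 := by
      have : ε < 1 := lt_of_le_of_lt hεhalf (by norm_num)
      linarith
    exact_mod_cast this
  obtain ⟨m, q, μ, hq, hμ, hμsum⟩ := ensemble_exists τ hτpsd hτne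
  have hρsum : (∑ i : Fin (m + 1 + 1),
      ((Fin.cons ε q : Fin (m + 2) → ℝ) i : ℂ) •
        (Fin.cons G μ : Fin (m + 2) → Matrix (ι × κ) (ι × κ) ℂ) i) = ρ := by
    rw [Fin.sum_univ_succ]
    simp only [Fin.cons_zero, Fin.cons_succ]
    rw [hμsum, hτdef]
    module
  have hpos : ∀ i : Fin (m + 1 + 1), 0 < (Fin.cons ε q : Fin (m + 2) → ℝ) i := by
    intro i
    refine Fin.cases ?_ ?_ i
    · simpa using hε0
    · intro j
      simpa using hq j
  have hpure' : ∀ i : Fin (m + 1 + 1),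
      IsPureState ((Fin.cons G μ : Fin (m + 2) → Matrix (ι × κ) (ι × κ) ℂ) i) := by
    intro i
    refine Fin.cases ?_ ?_ i
    · simpa using ⟨φ, hφ1, hGdef⟩
    · intro j
      simpa using hμ j
  refine le_trans (csInf_le bdd ⟨m + 1, Fin.cons ε q, Fin.cons G μ, hpos, hpure', hρsum, rfl⟩) ?_
  have hle := Finset.inf'_le (b := (0 : Fin (m + 1 + 1)))
    (fun i => pureEnt ((Fin.cons G μ : Fin (m + 2) → Matrix (ι × κ) (ι × κ) ℂ) i))
    (Finset.mem_univ 0)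
  rw [hφ2]
  exact hle


end QAdditivity
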